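/- arXiv:1406.0762 — 2 statements merged into one kernel-verified Lean document; each statement's English description precedes it below -/
import Mathlib

section
/- For the product Laguerre weight, ⟨Q_i^n, Q_l^m⟩_∇ = 0 whenever |n - m| ≥ 2, for all 0 ≤ i ≤ n and 0 ≤ l ≤ m. -/
open Finset MeasureTheory

/-- The classical Laguerre polynomial. -/
noncomputable def laguerre (α : ℝ) (n : ℕ) (x : ℝ) : ℝ :=
  ∑ k ∈ Finset.range (n + 1),
    (-1) ^ k * (Real.Gamma ((n : ℝ) + α + 1) /
      (Real.Gamma ((k : ℝ) + α + 1) * (n - k).factorial)) * x ^ k / k.factorial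

/-- The monic Laguerre polynomial `p_n(w_α;x) = (-1)^n n! L_n^α(x)`. -/
noncomputable def lagMonic (α : ℝ) (n : ℕ) (x : ℝ) : ℝ :=
  (-1) ^ n * n.factorial * laguerre α n x

/-- `q_n(w_α;x) = p_n(w_α;x) + n·p_{n-1}(w_α;x)`. -/
noncomputable def lagQ (α : ℝ) (n : ℕ) (x : ℝ) : ℝ :=
  lagMonic α n x + n * lagMonic α (n - 1) x

/-- The normalized gradient bilinear form for the product Laguerre weight
`W_{α,β}(x,y) = x^α e^{-x} y^β e^{-y}` on `[0,∞)²`. -/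
noncomputable def lagGrad (α β : ℝ) (f g : ℝ → ℝ → ℝ) : ℝ :=
  (1 / (Real.Gamma (α + 1) * Real.Gamma (β + 1))) *
    ∫ p in (Set.Ioi (0 : ℝ)) ×ˢ (Set.Ioi (0 : ℝ)),
      (deriv (fun t => f t p.2) p.1 * deriv (fun t => g t p.2) p.1 +
        deriv (fun t => f p.1 t) p.2 * deriv (fun t => g p.1 t) p.2) *
      (Real.rpow p.1 α * Real.exp (-p.1) * (Real.rpow p.2 β * Real.exp (-p.2)))

/-- Evaluation of a bivariate polynomial as a function of two real variables. -/
noncomputable def pev (P : MvPolynomial (Fin 2) ℝ) (x y : ℝ) : ℝ :=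
  MvPolynomial.eval ![x, y] P

/-- The product monic Laguerre polynomials `P_k^n(x,y) = p_{n-k}(w_α;x) p_k(w_β;y)`. -/
noncomputable def lagP (α β : ℝ) (n k : ℕ) (x y : ℝ) : ℝ :=
  lagMonic α (n - k) x * lagMonic β k y

/-- The polynomials `Q_k^n(x,y) = q_{n-k}(w_α;x) q_k(w_β;y)`. -/
noncomputable def lagQ2 (α β : ℝ) (n k : ℕ) (x y : ℝ) : ℝ :=
  lagQ α (n - k) x * lagQ β k y

/-- `h_k^m = (m-k)!·k!·(α+1)_{m-k}·(β+1)_k`. -/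
noncomputable def hkn (α β : ℝ) (k m : ℕ) : ℝ :=
  ((m - k).factorial : ℝ) * k.factorial *
    (ascPochhammer ℝ (m - k)).eval (α + 1) * (ascPochhammer ℝ k).eval (β + 1)


lemma gamma_int_aux {α : ℝ} (hα : -1 < α) (k : ℕ) : (0:ℝ) < α + k + 1 := by
  have : (0:ℝ) ≤ k := Nat.cast_nonneg k
  linarith

lemma mono_weight_eq {α : ℝ} (k : ℕ) {x : ℝ} (hx' : (0:ℝ) < x) :
    Real.exp (-x) * x ^ (α + (k:ℝ) + 1 - 1) = x ^ k * (Real.rpow x α * Real.exp (-x)) := by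
  rw [show Real.rpow x α = x ^ α from rfl,
    show α + (k:ℝ) + 1 - 1 = α + k by ring, Real.rpow_add hx', Real.rpow_natCast]
  ring

lemma integrableOn_mono {α : ℝ} (hα : -1 < α) (k : ℕ) :
    IntegrableOn (fun x : ℝ => x ^ k * (Real.rpow x α * Real.exp (-x))) (Set.Ioi 0) := by
  have h := Real.GammaIntegral_convergent (gamma_int_aux hα k)
  rw [show α + (k:ℝ) + 1 - 1 = α + (k:ℝ) + 1 - 1 from rfl] at h
  apply h.congr_fun ?_ measurableSet_Ioi
  intro x hx
  exact mono_weight_eq k hx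

lemma integral_mono {α : ℝ} (hα : -1 < α) (k : ℕ) :
    ∫ x in Set.Ioi (0:ℝ), x ^ k * (Real.rpow x α * Real.exp (-x))
      = Real.Gamma (α + k + 1) := by
  rw [Real.Gamma_eq_integral (gamma_int_aux hα k)]
  apply setIntegral_congr_fun measurableSet_Ioi
  intro x hx
  exact (mono_weight_eq k hx).symm


lemma alt_sum_pascal (n : ℕ) (f : ℕ → ℝ) :
    ∑ j ∈ Finset.range (n + 2), (-1 : ℝ) ^ j * ((n+1).choose j : ℝ) * f j
      = ∑ j ∈ Finset.range (n + 1), (-1 : ℝ) ^ j * (n.choose j : ℝ) * (f j - f (j + 1)) := by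
  have hA : ∑ j ∈ Finset.range (n + 1), (-1:ℝ)^j * (n.choose (j+1) : ℝ) * f (j+1)
      = f 0 - ∑ j ∈ Finset.range (n + 1), (-1:ℝ)^j * (n.choose j : ℝ) * f j := by
    have h1 : ∑ j ∈ Finset.range (n + 2), (-1:ℝ)^j * (n.choose j : ℝ) * f j
        = ∑ j ∈ Finset.range (n + 1), (-1:ℝ)^j * (n.choose j : ℝ) * f j := by
      rw [Finset.sum_range_succ, Nat.choose_succ_self]
      simp
    have h2 := Finset.sum_range_succ' (fun j => (-1:ℝ)^j * (n.choose j : ℝ) * f j) (n+1)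
    rw [h1] at h2
    simp only [pow_succ, Nat.choose_zero_right, pow_zero, Nat.cast_one] at h2
    -- h2 : A = ∑ j in range (n+1), (-1)^j * (-1) * (n.choose (j+1)) * f (j+1) + 1 * f 0 ... roughly
    rw [h2]
    rw [Finset.sum_congr rfl (fun j _ => by ring :
      ∀ j ∈ Finset.range (n+1), (-1:ℝ)^j * (-1) * ((n.choose (j+1) : ℝ)) * f (j+1)
        = -((-1:ℝ)^j * (n.choose (j+1) : ℝ) * f (j+1)))]
    rw [Finset.sum_neg_distrib]
    ring
  rw [Finset.sum_range_succ' (fun j => (-1:ℝ)^j * ((n+1).choose j : ℝ) * f j) (n+1)]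
  simp only [pow_succ, Nat.choose_zero_right, pow_zero, Nat.cast_one, Nat.choose_succ_succ,
    Nat.cast_add]
  rw [Finset.sum_congr rfl (fun j _ => by push_cast; ring :
    ∀ j ∈ Finset.range (n+1), (-1:ℝ)^j * (-1) * (((n.choose j : ℝ)) + (n.choose (j+1) : ℝ)) * f (j+1)
      = -((-1:ℝ)^j * (n.choose j : ℝ) * f (j+1)) + -((-1:ℝ)^j * (n.choose (j+1) : ℝ) * f (j+1)))]
  rw [Finset.sum_add_distrib, Finset.sum_neg_distrib, Finset.sum_neg_distrib, hA]
  rw [Finset.sum_congr rfl (fun j _ => by ring :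
    ∀ j ∈ Finset.range (n+1), (-1:ℝ)^j * (n.choose j : ℝ) * (f j - f (j+1))
      = (-1:ℝ)^j * (n.choose j : ℝ) * f j - (-1:ℝ)^j * (n.choose j : ℝ) * f (j+1))]
  rw [Finset.sum_sub_distrib]
  ring

lemma fd_zero : ∀ (n k : ℕ), k < n → ∀ c : ℝ,
    ∑ j ∈ Finset.range (n + 1), (-1:ℝ)^j * (n.choose j : ℝ) * ∏ t ∈ Finset.range k, (c + j + t) = 0 := by
  intro n
  induction n with
  | zero => intro k hk; omega
  | succ n ih =>
    intro k hk c
    rw [show n + 1 + 1 = n + 2 from rfl, alt_sum_pascal]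
    cases k with
    | zero => simp
    | succ k' =>
      have hdiff : ∀ j : ℕ, (∏ t ∈ Finset.range (k'+1), (c + j + t))
          - (∏ t ∈ Finset.range (k'+1), (c + (j+1 : ℕ) + t))
          = -((k':ℝ)+1) * ∏ t ∈ Finset.range k', ((c+1) + j + t) := by
        intro j
        rw [Finset.prod_range_succ' (fun t => (c + (j:ℝ) + t)) k',
            Finset.prod_range_succ (fun t => (c + ((j+1 : ℕ):ℝ) + t)) k']
        push_cast
        rw [Finset.prod_congr rfl (fun t _ => by ring :
          ∀ t ∈ Finset.range k', (c + (j:ℝ) + ((t:ℝ)+1)) = ((c+1) + j + t)),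
          Finset.prod_congr rfl (fun t _ => by ring :
          ∀ t ∈ Finset.range k', (c + ((j:ℝ)+1) + (t:ℝ)) = ((c+1) + j + t))]
        ring
      rw [Finset.sum_congr rfl (fun j _ => by rw [hdiff j] :
        ∀ j ∈ Finset.range (n+1), (-1:ℝ)^j * (n.choose j : ℝ) *
            ((∏ t ∈ Finset.range (k'+1), (c + j + t)) - (∏ t ∈ Finset.range (k'+1), (c + (j+1:ℕ) + t)))
          = (-1:ℝ)^j * (n.choose j : ℝ) * (-((k':ℝ)+1) * ∏ t ∈ Finset.range k', ((c+1) + j + t)))]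
      rw [Finset.sum_congr rfl (fun j _ => by ring :
        ∀ j ∈ Finset.range (n+1), (-1:ℝ)^j * (n.choose j : ℝ) *
            (-((k':ℝ)+1) * ∏ t ∈ Finset.range k', ((c+1) + j + t))
          = (-((k':ℝ)+1)) * ((-1:ℝ)^j * (n.choose j : ℝ) * ∏ t ∈ Finset.range k', ((c+1) + j + t)))]
      rw [← Finset.mul_sum, ih k' (by omega) (c+1), mul_zero]



lemma Gamma_add_nat {u : ℝ} (hu : 0 < u) (m : ℕ) :
    Real.Gamma (u + m) = Real.Gamma u * ∏ t ∈ Finset.range m, (u + t) := by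
  induction m with
  | zero => simp
  | succ m ih =>
    have h1 : u + ((m:ℝ)+1) = (u + m) + 1 := by ring
    have h2 : u + (m:ℝ) ≠ 0 := by positivity
    push_cast
    rw [h1, Real.Gamma_add_one h2, ih, Finset.prod_range_succ]
    ring

lemma key_term {α : ℝ} (hα : -1 < α) (n m k : ℕ) (hk : k ≤ n) :
    ((-1:ℝ)^n * n.factorial *
      ((-1)^k * (Real.Gamma ((n:ℝ)+α+1) / (Real.Gamma ((k:ℝ)+α+1) * (n-k).factorial)) / k.factorial)) *
      Real.Gamma (α + (k+m : ℕ) + 1)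
    = ((-1:ℝ)^n * Real.Gamma ((n:ℝ)+α+1)) *
      ((-1)^k * (n.choose k : ℝ) * ∏ t ∈ Finset.range m, (α + 1 + k + t)) := by
  have hu : (0:ℝ) < (k:ℝ) + α + 1 := by
    have : (0:ℝ) ≤ k := Nat.cast_nonneg k
    linarith
  have hg : Real.Gamma (α + ((k+m : ℕ):ℝ) + 1)
      = Real.Gamma ((k:ℝ)+α+1) * ∏ t ∈ Finset.range m, (α + 1 + k + t) := by
    push_cast
    rw [show α + ((k:ℝ)+(m:ℝ)) + 1 = ((k:ℝ)+α+1) + (m:ℕ) by push_cast; ring,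
      Gamma_add_nat hu m]
    congr 1
    exact Finset.prod_congr rfl (fun t _ => by ring)
  rw [hg]
  have h1 : Real.Gamma ((k:ℝ)+α+1) ≠ 0 := ne_of_gt (Real.Gamma_pos_of_pos hu)
  have h2 : (k.factorial : ℝ) ≠ 0 := Nat.cast_ne_zero.mpr k.factorial_ne_zero
  have h3 : ((n-k).factorial : ℝ) ≠ 0 := Nat.cast_ne_zero.mpr (n-k).factorial_ne_zero
  have hfact : ((n.choose k : ℝ)) * (k.factorial : ℝ) * ((n-k).factorial : ℝ) = (n.factorial : ℝ) := by
    exact_mod_cast congrArg (Nat.cast (R := ℝ)) (Nat.choose_mul_factorial_mul_factorial hk)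
  field_simp
  linear_combination (-(Real.Gamma ((n:ℝ)+α+1) *
    ∏ t ∈ Finset.range m, (α + 1 + k + t))) * hfact

lemma lagMonic_expand (α : ℝ) (n m : ℕ) (x : ℝ) :
    lagMonic α n x * x ^ m * (Real.rpow x α * Real.exp (-x))
      = ∑ k ∈ Finset.range (n+1), ((-1:ℝ)^n * n.factorial *
          ((-1)^k * (Real.Gamma ((n:ℝ)+α+1) / (Real.Gamma ((k:ℝ)+α+1) * (n-k).factorial)) / k.factorial)) *
          (x ^ (k+m) * (Real.rpow x α * Real.exp (-x))) := by
  rw [lagMonic, laguerre, Finset.mul_sum, Finset.sum_mul, Finset.sum_mul]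
  exact Finset.sum_congr rfl (fun k _ => by rw [pow_add]; ring)


lemma ortho_monic_pow {α : ℝ} (hα : -1 < α) {n m : ℕ} (hm : m < n) :
    ∫ x in Set.Ioi (0:ℝ), lagMonic α n x * x ^ m * (Real.rpow x α * Real.exp (-x)) = 0 := by
  have hbody : (fun x : ℝ => lagMonic α n x * x ^ m * (Real.rpow x α * Real.exp (-x)))
      = fun x => ∑ k ∈ Finset.range (n+1), ((-1:ℝ)^n * n.factorial *
          ((-1)^k * (Real.Gamma ((n:ℝ)+α+1) / (Real.Gamma ((k:ℝ)+α+1) * (n-k).factorial)) / k.factorial)) *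
          (x ^ (k+m) * (Real.rpow x α * Real.exp (-x))) := funext (lagMonic_expand α n m)
  rw [hbody, integral_finset_sum _ (fun k _ => ((integrableOn_mono hα (k+m)).const_mul _))]
  have : ∀ k ∈ Finset.range (n+1),
      (∫ x in Set.Ioi (0:ℝ), ((-1:ℝ)^n * n.factorial *
          ((-1)^k * (Real.Gamma ((n:ℝ)+α+1) / (Real.Gamma ((k:ℝ)+α+1) * (n-k).factorial)) / k.factorial)) *
          (x ^ (k+m) * (Real.rpow x α * Real.exp (-x))))
      = ((-1:ℝ)^n * Real.Gamma ((n:ℝ)+α+1)) *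
        ((-1)^k * (n.choose k : ℝ) * ∏ t ∈ Finset.range m, (α + 1 + k + t)) := by
    intro k hk
    rw [MeasureTheory.integral_const_mul, integral_mono hα (k+m),
      key_term hα n m k (by simpa using Nat.lt_succ_iff.mp (Finset.mem_range.mp hk))]
  rw [Finset.sum_congr rfl this, ← Finset.mul_sum]
  rw [Finset.sum_congr rfl (fun k _ => by ring :
    ∀ k ∈ Finset.range (n+1), ((-1:ℝ)^k * (n.choose k : ℝ) * ∏ t ∈ Finset.range m, (α + 1 + k + t))
      = (-1:ℝ)^k * (n.choose k : ℝ) * ∏ t ∈ Finset.range m, ((α+1) + k + t))]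
  rw [fd_zero n m hm (α+1), mul_zero]

noncomputable def lagD (α : ℝ) (m : ℕ) (x : ℝ) : ℝ :=
  ∑ k ∈ Finset.range (m+1),
    ((-1:ℝ)^k * (Real.Gamma ((m:ℝ)+α+1) / (Real.Gamma ((k:ℝ)+α+1) * (m-k).factorial)) *
      ((k:ℝ) * x^(k-1))) / k.factorial

lemma lagD_reindex (α : ℝ) (m : ℕ) (x : ℝ) :
    lagD α m x = ∑ k ∈ Finset.range m,
      ((-1:ℝ)^(k+1) * (Real.Gamma ((m:ℝ)+α+1) /
        (Real.Gamma (((k:ℝ)+1)+α+1) * (m-(k+1)).factorial)) *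
        (((k:ℝ)+1) * x^k)) / (k+1).factorial := by
  rw [lagD, Finset.sum_range_succ']
  simp only [Nat.cast_zero, zero_mul, mul_zero, zero_div, add_zero, Nat.cast_add, Nat.cast_one,
    Nat.add_sub_cancel]

lemma lagD_key {α : ℝ} (hα : -1 < α) (s : ℕ) (x : ℝ) :
    lagD α s x - lagD α (s+1) x = laguerre α s x := by
  have hterm : ∀ k ∈ Finset.range s,
      ((-1:ℝ)^(k+1) * (Real.Gamma ((s:ℝ)+α+1) /
          (Real.Gamma (((k:ℝ)+1)+α+1) * (s-(k+1)).factorial)) * (((k:ℝ)+1) * x^k)) / (k+1).factorial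
        - ((-1:ℝ)^(k+1) * (Real.Gamma (((s:ℕ):ℝ)+1+α+1) /
          (Real.Gamma (((k:ℝ)+1)+α+1) * ((s+1)-(k+1)).factorial)) * (((k:ℝ)+1) * x^k)) / (k+1).factorial
      = (-1:ℝ)^k * (Real.Gamma ((s:ℝ)+α+1) /
          (Real.Gamma ((k:ℝ)+α+1) * (s-k).factorial)) * x^k / k.factorial := by
    intro k hk
    have hks : k < s := Finset.mem_range.mp hk
    obtain ⟨d, hd⟩ : ∃ d, s - (k+1) = d := ⟨s - (k+1), rfl⟩
    have hd2 : s - k = d + 1 := by omega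
    have hsd : (s:ℝ) = (k:ℝ) + (d:ℝ) + 1 := by
      have : s = k + d + 1 := by omega
      exact_mod_cast congrArg (Nat.cast (R := ℝ)) this
    have hgk : (0:ℝ) < (k:ℝ) + α + 1 := by
      have : (0:ℝ) ≤ k := Nat.cast_nonneg k
      linarith
    have hG1 : Real.Gamma (((k:ℝ)+1)+α+1) = ((k:ℝ)+α+1) * Real.Gamma ((k:ℝ)+α+1) := by
      rw [show ((k:ℝ)+1)+α+1 = ((k:ℝ)+α+1)+1 by ring, Real.Gamma_add_one (ne_of_gt hgk)]
    have hgs : (0:ℝ) < (s:ℝ) + α + 1 := by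
      have : (0:ℝ) ≤ s := Nat.cast_nonneg s
      linarith
    have hG2 : Real.Gamma (((s:ℕ):ℝ)+1+α+1) = ((s:ℝ)+α+1) * Real.Gamma ((s:ℝ)+α+1) := by
      rw [show ((s:ℝ)+1)+α+1 = ((s:ℝ)+α+1)+1 by ring, Real.Gamma_add_one (ne_of_gt hgs)]
    rw [show (s+1)-(k+1) = s - k from by omega]
    rw [hd, hd2, hG1, hG2, Nat.factorial_succ (d), Nat.factorial_succ (k)]
    have hΓk : Real.Gamma ((k:ℝ)+α+1) ≠ 0 := ne_of_gt (Real.Gamma_pos_of_pos hgk)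
    have hkf : (k.factorial : ℝ) ≠ 0 := Nat.cast_ne_zero.mpr k.factorial_ne_zero
    have hdf : (d.factorial : ℝ) ≠ 0 := Nat.cast_ne_zero.mpr d.factorial_ne_zero
    have hka : ((k:ℝ)+α+1) ≠ 0 := ne_of_gt hgk
    rw [hsd]
    push_cast
    field_simp
    ring
  have htop :
      - (((-1:ℝ)^(s+1) * (Real.Gamma (((s:ℕ):ℝ)+1+α+1) /
          (Real.Gamma (((s:ℝ)+1)+α+1) * ((s+1)-(s+1)).factorial)) * (((s:ℝ)+1) * x^s)) / (s+1).factorial)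
      = (-1:ℝ)^s * (Real.Gamma ((s:ℝ)+α+1) /
          (Real.Gamma ((s:ℝ)+α+1) * (s-s).factorial)) * x^s / s.factorial := by
    have hgs : (0:ℝ) < (s:ℝ) + 1 + α + 1 := by
      have : (0:ℝ) ≤ s := Nat.cast_nonneg s
      linarith
    have h1 : Real.Gamma (((s:ℝ)+1)+α+1) ≠ 0 := by
      refine ne_of_gt (Real.Gamma_pos_of_pos ?_); linarith
    have h2 : Real.Gamma ((s:ℝ)+α+1) ≠ 0 := by
      refine ne_of_gt (Real.Gamma_pos_of_pos ?_)
      have : (0:ℝ) ≤ s := Nat.cast_nonneg s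
      linarith
    have h3 : (s.factorial : ℝ) ≠ 0 := Nat.cast_ne_zero.mpr s.factorial_ne_zero
    simp only [Nat.sub_self, Nat.factorial_zero, Nat.factorial_succ]
    push_cast
    field_simp
    ring
  rw [lagD_reindex, lagD_reindex, laguerre]
  rw [Finset.sum_range_succ (fun k =>
      ((-1:ℝ)^(k+1) * (Real.Gamma (((s+1:ℕ):ℝ)+α+1) /
        (Real.Gamma (((k:ℝ)+1)+α+1) * ((s+1)-(k+1)).factorial)) * (((k:ℝ)+1) * x^k)) / (k+1).factorial)]
  rw [Finset.sum_range_succ (fun k =>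
      (-1:ℝ)^k * (Real.Gamma ((s:ℝ)+α+1) /
        (Real.Gamma ((k:ℝ)+α+1) * (s-k).factorial)) * x^k / k.factorial)]
  rw [show ((s+1:ℕ):ℝ) = ((s:ℕ):ℝ)+1 by push_cast; ring]
  rw [sub_add_eq_sub_sub, ← Finset.sum_sub_distrib, Finset.sum_congr rfl hterm]
  linarith [htop]

lemma hasDerivAt_lagMonic (α : ℝ) (m : ℕ) (x : ℝ) :
    HasDerivAt (fun t => lagMonic α m t) ((-1:ℝ)^m * m.factorial * lagD α m x) x := by
  simp only [lagMonic, lagD]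
  refine HasDerivAt.const_mul _ ?_
  have : laguerre α m = fun t => ∑ k ∈ Finset.range (m + 1),
      (-1) ^ k * (Real.Gamma ((m : ℝ) + α + 1) /
        (Real.Gamma ((k : ℝ) + α + 1) * (m - k).factorial)) * t ^ k / k.factorial := by
    funext t; rw [laguerre]
  rw [this]
  apply HasDerivAt.fun_sum
  intro k _
  exact (((hasDerivAt_pow k x).const_mul
    ((-1:ℝ)^k * (Real.Gamma ((m:ℝ)+α+1) / (Real.Gamma ((k:ℝ)+α+1) * (m-k).factorial)))).div_const
    (k.factorial : ℝ))

lemma hasDerivAt_lagQ {α : ℝ} (hα : -1 < α) (n : ℕ) (x : ℝ) :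
    HasDerivAt (fun t => lagQ α n t) ((n:ℝ) * lagMonic α (n-1) x) x := by
  cases n with
  | zero =>
    have hconst : (fun t => lagQ α 0 t) = fun _ => lagQ α 0 0 := by
      funext t; simp [lagQ, lagMonic, laguerre]
    rw [hconst]
    simpa using hasDerivAt_const x (lagQ α 0 0)
  | succ s =>
    have h1 := (hasDerivAt_lagMonic α (s+1) x).add
      ((hasDerivAt_lagMonic α s x).const_mul (((s+1:ℕ)):ℝ))
    have hfun : (fun t => lagQ α (s+1) t)
        = fun t => lagMonic α (s+1) t + (((s+1:ℕ)):ℝ) * lagMonic α s t := by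
      funext t; simp [lagQ]
    have hk := lagD_key hα s x
    have hD : lagD α (s+1) x = lagD α s x - laguerre α s x := by linarith
    have key : (-1:ℝ)^(s+1) * (s+1).factorial * lagD α (s+1) x
        + (((s+1:ℕ)):ℝ) * ((-1:ℝ)^s * s.factorial * lagD α s x)
        = (((s+1:ℕ)):ℝ) * lagMonic α s x := by
      rw [hD, lagMonic, Nat.factorial_succ, pow_succ]
      push_cast
      ring
    rw [hfun, show ((s+1:ℕ):ℝ) * lagMonic α ((s+1)-1) x = ((s+1:ℕ):ℝ) * lagMonic α s x by norm_num]
    exact key ▸ h1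

def IsPolyFun (f : ℝ → ℝ) : Prop := ∃ p : Polynomial ℝ, ∀ x, f x = p.eval x

lemma IsPolyFun.mul {f g : ℝ → ℝ} (hf : IsPolyFun f) (hg : IsPolyFun g) :
    IsPolyFun (fun x => f x * g x) := by
  obtain ⟨p, hp⟩ := hf; obtain ⟨q, hq⟩ := hg
  exact ⟨p * q, fun x => by simp [hp, hq]⟩

lemma IsPolyFun.const_mul {f : ℝ → ℝ} (hf : IsPolyFun f) (c : ℝ) :
    IsPolyFun (fun x => c * f x) := by
  obtain ⟨p, hp⟩ := hf
  exact ⟨Polynomial.C c * p, fun x => by simp [hp]⟩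

lemma isPolyFun_pow (k : ℕ) : IsPolyFun (fun x : ℝ => x ^ k) :=
  ⟨Polynomial.X ^ k, fun x => by simp⟩

lemma isPolyFun_laguerre (α : ℝ) (n : ℕ) : IsPolyFun (laguerre α n) := by
  refine ⟨∑ k ∈ Finset.range (n + 1), Polynomial.C
    ((-1) ^ k * (Real.Gamma ((n : ℝ) + α + 1) /
      (Real.Gamma ((k : ℝ) + α + 1) * (n - k).factorial)) / k.factorial) * Polynomial.X ^ k,
    fun x => ?_⟩
  rw [laguerre, Polynomial.eval_finset_sum]
  exact Finset.sum_congr rfl (fun k _ => by simp; ring)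

lemma isPolyFun_lagMonic (α : ℝ) (n : ℕ) : IsPolyFun (lagMonic α n) := by
  have := (isPolyFun_laguerre α n).const_mul ((-1:ℝ)^n * n.factorial)
  obtain ⟨p, hp⟩ := this
  exact ⟨p, fun x => by rw [lagMonic, ← hp x]⟩

lemma isPolyFun_lagQ (α : ℝ) (n : ℕ) : IsPolyFun (lagQ α n) := by
  obtain ⟨p, hp⟩ := isPolyFun_lagMonic α n
  obtain ⟨q, hq⟩ := (isPolyFun_lagMonic α (n-1)).const_mul (n : ℝ)
  exact ⟨p + q, fun x => by simp [lagQ, hp, ← hq x]⟩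

lemma integrableOn_polyMul {α : ℝ} (hα : -1 < α) {f : ℝ → ℝ} (hf : IsPolyFun f) :
    IntegrableOn (fun x => f x * (Real.rpow x α * Real.exp (-x))) (Set.Ioi 0) := by
  obtain ⟨p, hp⟩ := hf
  have : (fun x => f x * (Real.rpow x α * Real.exp (-x)))
      = fun x => ∑ k ∈ Finset.range (p.natDegree + 1),
          p.coeff k * (x ^ k * (Real.rpow x α * Real.exp (-x))) := by
    funext x
    rw [hp, Polynomial.eval_eq_sum_range, Finset.sum_mul]
    exact Finset.sum_congr rfl (fun k _ => by ring)
  rw [this]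
  exact integrable_finset_sum _ (fun k _ => (integrableOn_mono hα k).const_mul _)

lemma ortho_monic_monic_aux {α : ℝ} (hα : -1 < α) {a b : ℕ} (hab : b < a) :
    ∫ x in Set.Ioi (0:ℝ), lagMonic α a x * lagMonic α b x * (Real.rpow x α * Real.exp (-x)) = 0 := by
  have hb : ∀ x : ℝ, lagMonic α b x = ∑ k ∈ Finset.range (b+1),
      ((-1:ℝ)^b * b.factorial * ((-1)^k * (Real.Gamma ((b:ℝ)+α+1) /
        (Real.Gamma ((k:ℝ)+α+1) * (b-k).factorial)) / k.factorial)) * x ^ k := by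
    intro x
    rw [lagMonic, laguerre, Finset.mul_sum]
    exact Finset.sum_congr rfl (fun k _ => by ring)
  have hbody : (fun x : ℝ => lagMonic α a x * lagMonic α b x * (Real.rpow x α * Real.exp (-x)))
      = fun x => ∑ k ∈ Finset.range (b+1),
          ((-1:ℝ)^b * b.factorial * ((-1)^k * (Real.Gamma ((b:ℝ)+α+1) /
            (Real.Gamma ((k:ℝ)+α+1) * (b-k).factorial)) / k.factorial)) *
          (lagMonic α a x * x ^ k * (Real.rpow x α * Real.exp (-x))) := by
    funext x
    rw [hb x, Finset.mul_sum, Finset.sum_mul]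
    exact Finset.sum_congr rfl (fun k _ => by ring)
  rw [hbody, integral_finset_sum _ (fun k _ =>
    ((integrableOn_polyMul hα ((isPolyFun_lagMonic α a).mul (isPolyFun_pow k))).const_mul _))]
  apply Finset.sum_eq_zero
  intro k hk
  rw [MeasureTheory.integral_const_mul,
    ortho_monic_pow hα (show k < a by have := Finset.mem_range.mp hk; omega), mul_zero]

lemma ortho_monic_monic {α : ℝ} (hα : -1 < α) {a b : ℕ} (hab : a ≠ b) :
    ∫ x in Set.Ioi (0:ℝ), lagMonic α a x * lagMonic α b x * (Real.rpow x α * Real.exp (-x)) = 0 := by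
  rcases Nat.lt_or_ge b a with h | h
  · exact ortho_monic_monic_aux hα h
  · have h' : a < b := by omega
    rw [show (fun x : ℝ => lagMonic α a x * lagMonic α b x * (Real.rpow x α * Real.exp (-x)))
        = fun x => lagMonic α b x * lagMonic α a x * (Real.rpow x α * Real.exp (-x)) from
      funext (fun x => by ring)]
    exact ortho_monic_monic_aux hα h'

lemma ortho_q_q {α : ℝ} (hα : -1 < α) {a b : ℕ} (h : a + 2 ≤ b ∨ b + 2 ≤ a) :
    ∫ x in Set.Ioi (0:ℝ), lagQ α a x * lagQ α b x * (Real.rpow x α * Real.exp (-x)) = 0 := by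
  have i1 := integrableOn_polyMul hα ((isPolyFun_lagMonic α a).mul (isPolyFun_lagMonic α b))
  have i2 := (integrableOn_polyMul hα
    ((isPolyFun_lagMonic α a).mul (isPolyFun_lagMonic α (b-1)))).const_mul (b:ℝ)
  have i3 := (integrableOn_polyMul hα
    ((isPolyFun_lagMonic α (a-1)).mul (isPolyFun_lagMonic α b))).const_mul (a:ℝ)
  have i4 := (integrableOn_polyMul hα
    ((isPolyFun_lagMonic α (a-1)).mul (isPolyFun_lagMonic α (b-1)))).const_mul ((a:ℝ)*(b:ℝ))
  have hbody : (fun x : ℝ => lagQ α a x * lagQ α b x * (Real.rpow x α * Real.exp (-x)))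
      = fun x =>
        (lagMonic α a x * lagMonic α b x * (Real.rpow x α * Real.exp (-x))
          + (b:ℝ) * (lagMonic α a x * lagMonic α (b-1) x * (Real.rpow x α * Real.exp (-x))))
        + ((a:ℝ) * (lagMonic α (a-1) x * lagMonic α b x * (Real.rpow x α * Real.exp (-x)))
          + ((a:ℝ)*(b:ℝ)) * (lagMonic α (a-1) x * lagMonic α (b-1) x * (Real.rpow x α * Real.exp (-x)))) := by
    funext x
    rw [lagQ, lagQ]
    ring
  have j1 : Integrable (fun x : ℝ => lagMonic α a x * lagMonic α b x * (Real.rpow x α * Real.exp (-x))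
      + (b:ℝ) * (lagMonic α a x * lagMonic α (b-1) x * (Real.rpow x α * Real.exp (-x))))
      (volume.restrict (Set.Ioi 0)) := i1.add i2
  have j2 : Integrable (fun x : ℝ => (a:ℝ) * (lagMonic α (a-1) x * lagMonic α b x * (Real.rpow x α * Real.exp (-x)))
      + ((a:ℝ)*(b:ℝ)) * (lagMonic α (a-1) x * lagMonic α (b-1) x * (Real.rpow x α * Real.exp (-x))))
      (volume.restrict (Set.Ioi 0)) := i3.add i4
  rw [hbody, integral_add j1 j2, integral_add i1 i2, integral_add i3 i4]
  rw [MeasureTheory.integral_const_mul, MeasureTheory.integral_const_mul, MeasureTheory.integral_const_mul]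
  rw [ortho_monic_monic hα (show a ≠ b by omega),
    ortho_monic_monic hα (show a ≠ b - 1 by omega),
    ortho_monic_monic hα (show a - 1 ≠ b by omega),
    ortho_monic_monic hα (show a - 1 ≠ b - 1 by omega)]
  ring


/-- For the product Laguerre weight, `⟨Q_i^n, Q_l^m⟩_∇ = 0` whenever `|n - m| ≥ 2`. -/
theorem lagGrad_far_orthogonal (α β : ℝ) (hα : -1 < α) (hβ : -1 < β)
    (n m i l : ℕ) (hi : i ≤ n) (hl : l ≤ m) (hnm : 2 ≤ |(n : ℤ) - m|) :
    lagGrad α β (lagQ2 α β n i) (lagQ2 α β m l) = 0 := by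
  have hnm' : n + 2 ≤ m ∨ m + 2 ≤ n := by
    rcases abs_cases ((n:ℤ) - (m:ℤ)) with ⟨he, _⟩ | ⟨he, _⟩ <;> [right; left] <;> omega
  have hd1 : ∀ (γ δ : ℝ), -1 < γ → ∀ (a c : ℕ) (x y : ℝ),
      deriv (fun t => lagQ γ a t * lagQ δ c y) x
        = (a:ℝ) * lagMonic γ (a-1) x * lagQ δ c y :=
    fun γ δ hγ a c x y => ((hasDerivAt_lagQ hγ a x).mul_const _).deriv
  have hd2 : ∀ (γ δ : ℝ), -1 < δ → ∀ (a c : ℕ) (x y : ℝ),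
      deriv (fun t => lagQ γ a x * lagQ δ c t) y
        = lagQ γ a x * ((c:ℝ) * lagMonic δ (c-1) y) :=
    fun γ δ hδ a c x y => ((hasDerivAt_lagQ hδ c y).const_mul _).deriv
  have hbody : (fun p : ℝ × ℝ =>
      (deriv (fun t => lagQ2 α β n i t p.2) p.1 * deriv (fun t => lagQ2 α β m l t p.2) p.1 +
        deriv (fun t => lagQ2 α β n i p.1 t) p.2 * deriv (fun t => lagQ2 α β m l p.1 t) p.2) *
      (Real.rpow p.1 α * Real.exp (-p.1) * (Real.rpow p.2 β * Real.exp (-p.2))))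
      = fun p : ℝ × ℝ =>
        (((n-i : ℕ):ℝ) * lagMonic α ((n-i)-1) p.1 * (((m-l : ℕ):ℝ) * lagMonic α ((m-l)-1) p.1) *
            (Real.rpow p.1 α * Real.exp (-p.1))) *
          (lagQ β i p.2 * lagQ β l p.2 * (Real.rpow p.2 β * Real.exp (-p.2)))
        + (lagQ α (n-i) p.1 * lagQ α (m-l) p.1 * (Real.rpow p.1 α * Real.exp (-p.1))) *
          ((i:ℝ) * lagMonic β (i-1) p.2 * ((l:ℝ) * lagMonic β (l-1) p.2) *
            (Real.rpow p.2 β * Real.exp (-p.2))) := by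
    funext p
    simp only [lagQ2]
    rw [hd1 α β hα (n-i) i p.1 p.2, hd1 α β hα (m-l) l p.1 p.2,
      hd2 α β hβ (n-i) i p.1 p.2, hd2 α β hβ (m-l) l p.1 p.2]
    ring
  rw [lagGrad, hbody, Measure.volume_eq_prod, ← Measure.prod_restrict]
  have iF1 : IntegrableOn (fun x : ℝ => ((n-i : ℕ):ℝ) * lagMonic α ((n-i)-1) x *
      (((m-l : ℕ):ℝ) * lagMonic α ((m-l)-1) x) * (Real.rpow x α * Real.exp (-x))) (Set.Ioi 0) :=
    integrableOn_polyMul hα (((isPolyFun_lagMonic α ((n-i)-1)).const_mul _).mul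
      ((isPolyFun_lagMonic α ((m-l)-1)).const_mul _))
  have iG1 : IntegrableOn (fun y : ℝ => lagQ β i y * lagQ β l y *
      (Real.rpow y β * Real.exp (-y))) (Set.Ioi 0) :=
    integrableOn_polyMul hβ ((isPolyFun_lagQ β i).mul (isPolyFun_lagQ β l))
  have iF2 : IntegrableOn (fun x : ℝ => lagQ α (n-i) x * lagQ α (m-l) x *
      (Real.rpow x α * Real.exp (-x))) (Set.Ioi 0) :=
    integrableOn_polyMul hα ((isPolyFun_lagQ α (n-i)).mul (isPolyFun_lagQ α (m-l)))
  have iG2 : IntegrableOn (fun y : ℝ => (i:ℝ) * lagMonic β (i-1) y *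
      ((l:ℝ) * lagMonic β (l-1) y) * (Real.rpow y β * Real.exp (-y))) (Set.Ioi 0) :=
    integrableOn_polyMul hβ (((isPolyFun_lagMonic β (i-1)).const_mul _).mul
      ((isPolyFun_lagMonic β (l-1)).const_mul _))
  have int1 : Integrable (fun z : ℝ × ℝ =>
      (((n-i : ℕ):ℝ) * lagMonic α ((n-i)-1) z.1 * (((m-l : ℕ):ℝ) * lagMonic α ((m-l)-1) z.1) *
        (Real.rpow z.1 α * Real.exp (-z.1))) *
      (lagQ β i z.2 * lagQ β l z.2 * (Real.rpow z.2 β * Real.exp (-z.2))))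
      ((volume.restrict (Set.Ioi 0)).prod (volume.restrict (Set.Ioi 0))) :=
    Integrable.mul_prod iF1 iG1
  have int2 : Integrable (fun z : ℝ × ℝ =>
      (lagQ α (n-i) z.1 * lagQ α (m-l) z.1 * (Real.rpow z.1 α * Real.exp (-z.1))) *
      ((i:ℝ) * lagMonic β (i-1) z.2 * ((l:ℝ) * lagMonic β (l-1) z.2) *
        (Real.rpow z.2 β * Real.exp (-z.2))))
      ((volume.restrict (Set.Ioi 0)).prod (volume.restrict (Set.Ioi 0))) :=
    Integrable.mul_prod iF2 iG2
  rw [integral_add int1 int2,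
    integral_prod_mul (fun x : ℝ => ((n-i : ℕ):ℝ) * lagMonic α ((n-i)-1) x *
        (((m-l : ℕ):ℝ) * lagMonic α ((m-l)-1) x) * (Real.rpow x α * Real.exp (-x)))
      (fun y : ℝ => lagQ β i y * lagQ β l y * (Real.rpow y β * Real.exp (-y))),
    integral_prod_mul (fun x : ℝ => lagQ α (n-i) x * lagQ α (m-l) x *
        (Real.rpow x α * Real.exp (-x)))
      (fun y : ℝ => (i:ℝ) * lagMonic β (i-1) y * ((l:ℝ) * lagMonic β (l-1) y) *
        (Real.rpow y β * Real.exp (-y)))]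
  have key1 : (∫ x in Set.Ioi (0:ℝ), ((n-i : ℕ):ℝ) * lagMonic α ((n-i)-1) x *
        (((m-l : ℕ):ℝ) * lagMonic α ((m-l)-1) x) * (Real.rpow x α * Real.exp (-x))) *
      (∫ y in Set.Ioi (0:ℝ), lagQ β i y * lagQ β l y * (Real.rpow y β * Real.exp (-y))) = 0 := by
    by_cases hab : n - i = m - l
    · have hil : i + 2 ≤ l ∨ l + 2 ≤ i := by omega
      rw [ortho_q_q hβ hil, mul_zero]
    · have hz : (∫ x in Set.Ioi (0:ℝ), ((n-i : ℕ):ℝ) * lagMonic α ((n-i)-1) x *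
          (((m-l : ℕ):ℝ) * lagMonic α ((m-l)-1) x) * (Real.rpow x α * Real.exp (-x))) = 0 := by
        have hrw : (fun x : ℝ => ((n-i : ℕ):ℝ) * lagMonic α ((n-i)-1) x *
            (((m-l : ℕ):ℝ) * lagMonic α ((m-l)-1) x) * (Real.rpow x α * Real.exp (-x)))
            = fun x => (((n-i : ℕ):ℝ) * ((m-l : ℕ):ℝ)) *
              (lagMonic α ((n-i)-1) x * lagMonic α ((m-l)-1) x *
                (Real.rpow x α * Real.exp (-x))) := funext fun x => by ring
        rw [hrw, MeasureTheory.integral_const_mul]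
        rcases Nat.eq_zero_or_pos (n-i) with h0 | h0
        · rw [h0]; simp
        rcases Nat.eq_zero_or_pos (m-l) with h1 | h1
        · rw [h1]; simp
        rw [ortho_monic_monic hα (show (n-i)-1 ≠ (m-l)-1 by omega), mul_zero]
      rw [hz, zero_mul]
  have key2 : (∫ x in Set.Ioi (0:ℝ), lagQ α (n-i) x * lagQ α (m-l) x *
        (Real.rpow x α * Real.exp (-x))) *
      (∫ y in Set.Ioi (0:ℝ), (i:ℝ) * lagMonic β (i-1) y *
        ((l:ℝ) * lagMonic β (l-1) y) * (Real.rpow y β * Real.exp (-y))) = 0 := by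
    by_cases hil : i = l
    · have hab2 : (n-i) + 2 ≤ (m-l) ∨ (m-l) + 2 ≤ (n-i) := by omega
      rw [ortho_q_q hα hab2, zero_mul]
    · have hz : (∫ y in Set.Ioi (0:ℝ), (i:ℝ) * lagMonic β (i-1) y *
          ((l:ℝ) * lagMonic β (l-1) y) * (Real.rpow y β * Real.exp (-y))) = 0 := by
        have hrw : (fun y : ℝ => (i:ℝ) * lagMonic β (i-1) y *
            ((l:ℝ) * lagMonic β (l-1) y) * (Real.rpow y β * Real.exp (-y)))
            = fun y => ((i:ℝ) * (l:ℝ)) *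
              (lagMonic β (i-1) y * lagMonic β (l-1) y *
                (Real.rpow y β * Real.exp (-y))) := funext fun y => by ring
        rw [hrw, MeasureTheory.integral_const_mul]
        rcases Nat.eq_zero_or_pos i with h0 | h0
        · rw [h0]; simp
        rcases Nat.eq_zero_or_pos l with h1 | h1
        · rw [h1]; simp
        rw [ortho_monic_monic hβ (show i-1 ≠ l-1 by omega), mul_zero]
      rw [hz, mul_zero]
  rw [key1, key2, add_zero, mul_zero]
end

section
/- In the product Laguerre setting, the polynomials Q_0^n(x,y) = q_n(w_α;x) and Q_n^n(x,y) = q_n(w_β;y) are themselves ∇-orthogonal of degree n, i.e. S_0^n = Q_0^n and S_n^n = Q_n^n (up to an additive constant) are monic orthogonal polynomials for the bilinear form ⟨·,·⟩_∇. -/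
open Finset MeasureTheory

/-! ### Auxiliary lemmas -/

section Aux

open Set Polynomial

lemma alt_choose_sum (N : ℕ) (hN : 1 ≤ N) :
    ∑ m ∈ range (N + 1), (-1 : ℝ) ^ m * (N.choose m : ℝ) = 0 := by
  have h := add_pow (-1 : ℝ) 1 N
  simp only [neg_add_cancel, one_pow, mul_one] at h
  rw [zero_pow (by omega)] at h
  exact h.symm

lemma altsum : ∀ (k : ℕ) (N : ℕ) (c : ℝ), k < N →
    ∑ m ∈ range (N + 1), (-1 : ℝ) ^ m * (N.choose m : ℝ) * ∏ j ∈ range k, (c + m + j) = 0 := by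
  intro k
  induction k with
  | zero =>
    intro N c hN
    simp only [Finset.range_zero, Finset.prod_empty, mul_one]
    exact alt_choose_sum N hN
  | succ k ih =>
    intro N c hN
    obtain ⟨M, rfl⟩ : ∃ M, N = M + 1 := ⟨N - 1, by omega⟩
    have hkM : k < M := by omega
    set f : ℕ → ℝ := fun m => ∏ j ∈ range (k + 1), (c + m + j) with hf
    have key : ∀ m : ℕ, f m - f (m + 1) = -(k + 1) * ∏ j ∈ range k, ((c + 1) + m + j) := by
      intro m
      have h1 : f m = (c + m) * ∏ j ∈ range k, ((c + 1) + m + j) := by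
        rw [hf]
        simp only
        rw [Finset.prod_range_succ' (fun j => (c + m + j))]
        simp only [Nat.cast_zero, add_zero, Nat.cast_add, Nat.cast_one]
        rw [mul_comm]
        congr 1
        apply Finset.prod_congr rfl
        intro j _
        push_cast
        ring
      have h2 : f (m + 1) = (c + m + 1 + k) * ∏ j ∈ range k, ((c + 1) + m + j) := by
        rw [hf]
        simp only
        rw [Finset.prod_range_succ]
        rw [mul_comm]
        congr 1
        · push_cast; ring
        · apply Finset.prod_congr rfl
          intro j _
          push_cast
          ring
      rw [h1, h2]
      ring
    have expand : ∑ m ∈ range (M + 2), (-1 : ℝ) ^ m * ((M+1).choose m : ℝ) * f m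
        = ∑ m ∈ range (M + 1), (-1 : ℝ) ^ m * (M.choose m : ℝ) * (f m - f (m + 1)) := by
      rw [Finset.sum_range_succ' (fun m => (-1 : ℝ) ^ m * ((M+1).choose m : ℝ) * f m)]
      have hsplit : ∀ m, (-1 : ℝ) ^ (m+1) * ((M+1).choose (m+1) : ℝ) * f (m+1)
          = -((-1:ℝ)^m * (M.choose m : ℝ) * f (m+1)) + (-1:ℝ)^(m+1) * (M.choose (m+1) : ℝ) * f (m+1) := by
        intro m
        rw [Nat.choose_succ_succ]
        push_cast
        ring
      rw [Finset.sum_congr rfl (fun m _ => hsplit m), Finset.sum_add_distrib]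
      have hB : (∑ m ∈ range (M+1), (-1:ℝ)^(m+1) * (M.choose (m+1) : ℝ) * f (m+1))
          + (-1:ℝ)^0 * ((M+1).choose 0 : ℝ) * f 0
          = ∑ m ∈ range (M + 1), (-1 : ℝ) ^ m * (M.choose m : ℝ) * f m := by
        have := Finset.sum_range_succ' (fun m => (-1 : ℝ) ^ m * (M.choose m : ℝ) * f m) (M + 1)
        rw [Finset.sum_range_succ (fun m => (-1 : ℝ) ^ m * (M.choose m : ℝ) * f m) (M+1)] at this
        simp only [Nat.choose_succ_self, Nat.cast_zero, mul_zero, zero_mul, add_zero] at this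
        simp only [Nat.choose_zero_right, Nat.cast_one, pow_zero, one_mul] at this ⊢
        linarith [this]
      rw [add_assoc, hB, ← Finset.sum_add_distrib]
      apply Finset.sum_congr rfl
      intro m _
      ring
    rw [expand]
    have : ∑ m ∈ range (M + 1), (-1 : ℝ) ^ m * (M.choose m : ℝ) * (f m - f (m + 1))
        = -(k+1) * ∑ m ∈ range (M + 1), (-1 : ℝ) ^ m * (M.choose m : ℝ) * ∏ j ∈ range k, ((c + 1) + m + j) := by
      rw [Finset.mul_sum]
      apply Finset.sum_congr rfl
      intro m _
      rw [key m]
      ring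
    rw [this, ih M (c + 1) hkM, mul_zero]

noncomputable def lagC (α : ℝ) (N m : ℕ) : ℝ :=
  (-1) ^ N * N.factorial *
    ((-1) ^ m * (Real.Gamma ((N : ℝ) + α + 1) /
      (Real.Gamma ((m : ℝ) + α + 1) * (N - m).factorial)) / m.factorial)

lemma lagMonic_eq_sum (α : ℝ) (N : ℕ) (x : ℝ) :
    lagMonic α N x = ∑ m ∈ range (N + 1), lagC α N m * x ^ m := by
  unfold lagMonic laguerre lagC
  rw [Finset.mul_sum]
  exact Finset.sum_congr rfl fun m _ => by ring

lemma lagMonic_expand_s13 (α : ℝ) (N i : ℕ) (x W : ℝ) :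
    lagMonic α N x * (x ^ i * W) = ∑ m ∈ range (N + 1), lagC α N m * (x ^ (m + i) * W) := by
  rw [lagMonic_eq_sum, Finset.sum_mul]
  exact Finset.sum_congr rfl fun m _ => by rw [pow_add]; ring

lemma Gamma_shift (x : ℝ) (hx : 0 < x) (k : ℕ) :
    Real.Gamma (x + k) = (∏ j ∈ range k, (x + j)) * Real.Gamma x := by
  induction k with
  | zero => simp
  | succ k ih =>
    have h1 : x + (k + 1 : ℕ) = (x + k) + 1 := by push_cast; ring
    rw [h1, Real.Gamma_add_one (by positivity), ih, Finset.prod_range_succ]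
    ring

lemma gamma_arg_pos (α : ℝ) (hα : -1 < α) (m : ℕ) : 0 < (m : ℝ) + α + 1 := by
  have : (0:ℝ) ≤ m := Nat.cast_nonneg m
  linarith

lemma weight_eq (α : ℝ) (d : ℕ) : ∀ x ∈ Ioi (0:ℝ),
    x ^ d * (Real.rpow x α * Real.exp (-x)) = Real.exp (-x) * x ^ (((d : ℝ) + α + 1) - 1) := by
  intro x hx
  have hx0 : 0 < x := hx
  have : (((d : ℝ) + α + 1) - 1) = (d : ℝ) + α := by ring
  rw [this, Real.rpow_add hx0, ← Real.rpow_natCast x d]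
  show x ^ (d:ℝ) * (x ^ α * Real.exp (-x)) = Real.exp (-x) * (x ^ (d:ℝ) * x ^ α)
  ring

lemma gammaInt (α : ℝ) (hα : -1 < α) (d : ℕ) :
    ∫ x in Ioi (0:ℝ), x ^ d * (Real.rpow x α * Real.exp (-x)) = Real.Gamma ((d : ℝ) + α + 1) := by
  rw [Real.Gamma_eq_integral (gamma_arg_pos α hα d)]
  exact setIntegral_congr_fun measurableSet_Ioi (fun x hx => weight_eq α d x hx)

lemma gammaInt_integrable (α : ℝ) (hα : -1 < α) (d : ℕ) :
    IntegrableOn (fun x => x ^ d * (Real.rpow x α * Real.exp (-x))) (Ioi (0:ℝ)) := by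
  exact (Real.GammaIntegral_convergent (gamma_arg_pos α hα d)).congr_fun
    (fun x hx => (weight_eq α d x hx).symm) measurableSet_Ioi

lemma lagMonic_pow_integrable (α : ℝ) (hα : -1 < α) (N i : ℕ) :
    IntegrableOn (fun x => lagMonic α N x * (x ^ i * (Real.rpow x α * Real.exp (-x)))) (Ioi (0:ℝ)) := by
  have : (fun x => lagMonic α N x * (x ^ i * (Real.rpow x α * Real.exp (-x))))
      = fun x => ∑ m ∈ range (N + 1), lagC α N m * (x ^ (m + i) * (Real.rpow x α * Real.exp (-x))) :=
    funext fun x => lagMonic_expand_s13 α N i x _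
  rw [this]
  exact integrable_finset_sum _ fun m _ => (gammaInt_integrable α hα (m + i)).const_mul _

lemma lagMonic_ortho (α : ℝ) (hα : -1 < α) (N k : ℕ) (hk : k < N) :
    ∫ x in Ioi (0:ℝ), lagMonic α N x * (x ^ k * (Real.rpow x α * Real.exp (-x))) = 0 := by
  have hfun : (fun x => lagMonic α N x * (x ^ k * (Real.rpow x α * Real.exp (-x))))
      = fun x => ∑ m ∈ range (N + 1), lagC α N m * (x ^ (m + k) * (Real.rpow x α * Real.exp (-x))) :=
    funext fun x => lagMonic_expand_s13 α N k x _
  rw [hfun, integral_finset_sum _ fun m _ => (gammaInt_integrable α hα (m + k)).const_mul _]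
  have hterm : ∀ m ∈ range (N + 1),
      ∫ x in Ioi (0:ℝ), lagC α N m * (x ^ (m + k) * (Real.rpow x α * Real.exp (-x)))
      = ((-1) ^ N * Real.Gamma ((N : ℝ) + α + 1)) *
        ((-1) ^ m * (N.choose m : ℝ) * ∏ j ∈ range k, ((α + 1) + m + j)) := by
    intro m hm
    have hmN : m ≤ N := by simpa using Nat.lt_succ_iff.mp (Finset.mem_range.mp hm)
    rw [MeasureTheory.integral_const_mul, gammaInt α hα (m + k)]
    have hpos : 0 < (m : ℝ) + α + 1 := gamma_arg_pos α hα m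
    have harg : ((m + k : ℕ) : ℝ) + α + 1 = ((m : ℝ) + α + 1) + k := by push_cast; ring
    rw [harg, Gamma_shift _ hpos]
    have hprod : ∏ j ∈ range k, (((m:ℝ) + α + 1) + j) = ∏ j ∈ range k, ((α + 1) + m + j) :=
      Finset.prod_congr rfl fun j _ => by ring
    rw [hprod]
    unfold lagC
    have hGm : Real.Gamma ((m : ℝ) + α + 1) ≠ 0 := (Real.Gamma_pos_of_pos hpos).ne'
    have hchoose : (N.choose m : ℝ) = (N.factorial : ℝ) / (m.factorial * (N - m).factorial) :=
      Nat.cast_choose ℝ hmN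
    have hfm : (m.factorial : ℝ) ≠ 0 := Nat.cast_ne_zero.mpr m.factorial_ne_zero
    have hfNm : ((N - m).factorial : ℝ) ≠ 0 := Nat.cast_ne_zero.mpr (N - m).factorial_ne_zero
    rw [hchoose]
    field_simp
  rw [Finset.sum_congr rfl hterm, ← Finset.mul_sum, altsum k N (α + 1) hk, mul_zero]

lemma poly_ortho (α : ℝ) (hα : -1 < α) (N : ℕ) (q : Polynomial ℝ)
    (hq : q.degree < (N : WithBot ℕ)) :
    ∫ x in Ioi (0:ℝ), lagMonic α N x * (q.eval x * (Real.rpow x α * Real.exp (-x))) = 0 := by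
  by_cases hq0 : q = 0
  · simp [hq0]
  · have hnd : q.natDegree < N := (Polynomial.natDegree_lt_iff_degree_lt hq0).mpr hq
    have hfun : (fun x => lagMonic α N x * (q.eval x * (Real.rpow x α * Real.exp (-x))))
        = fun x => ∑ i ∈ range N, q.coeff i * (lagMonic α N x * (x ^ i * (Real.rpow x α * Real.exp (-x)))) := by
      funext x
      rw [Polynomial.eval_eq_sum_range' hnd, Finset.sum_mul, Finset.mul_sum]
      exact Finset.sum_congr rfl fun i _ => by ring
    rw [hfun, integral_finset_sum _ fun i _ => (lagMonic_pow_integrable α hα N i).const_mul _]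
    apply Finset.sum_eq_zero
    intro i hi
    rw [MeasureTheory.integral_const_mul, lagMonic_ortho α hα N i (Finset.mem_range.mp hi), mul_zero]

lemma lagC_self (α : ℝ) (hα : -1 < α) (n : ℕ) : lagC α n n = 1 := by
  unfold lagC
  have hG : Real.Gamma ((n : ℝ) + α + 1) ≠ 0 := (Real.Gamma_pos_of_pos (gamma_arg_pos α hα n)).ne'
  have hf : (n.factorial : ℝ) ≠ 0 := Nat.cast_ne_zero.mpr n.factorial_ne_zero
  simp [Nat.sub_self]
  field_simp
  rw [← pow_mul, mul_comm, pow_mul]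
  norm_num

lemma lagC_rec (α : ℝ) (hα : -1 < α) (N k : ℕ) (hk : k < N) :
    ((k : ℝ) + 1) * (lagC α (N + 1) (k + 1) + ((N : ℝ) + 1) * lagC α N (k + 1))
      = ((N : ℝ) + 1) * lagC α N k := by
  unfold lagC
  have hGk : 0 < Real.Gamma ((k : ℝ) + α + 1) := Real.Gamma_pos_of_pos (gamma_arg_pos α hα k)
  have hGN : 0 < Real.Gamma ((N : ℝ) + α + 1) := Real.Gamma_pos_of_pos (gamma_arg_pos α hα N)
  have h1 : ((N + 1 : ℕ) : ℝ) + α + 1 = ((N : ℝ) + α + 1) + 1 := by push_cast; ring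
  have h2 : ((k + 1 : ℕ) : ℝ) + α + 1 = ((k : ℝ) + α + 1) + 1 := by push_cast; ring
  rw [h1, h2, Real.Gamma_add_one (gamma_arg_pos α hα N).ne', Real.Gamma_add_one (gamma_arg_pos α hα k).ne']
  have e1 : N + 1 - (k + 1) = N - k := by omega
  have e2 : N - (k + 1) = N - k - 1 := by omega
  rw [e1, e2]
  have hc : ((N - k - 1 : ℕ) : ℝ) = (N : ℝ) - (k : ℝ) - 1 := by
    have h' : (N - k - 1 : ℕ) = N - (k + 1) := by omega
    rw [h', Nat.cast_sub hk]
    push_cast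
    ring
  have hfac1 : (((N + 1).factorial : ℕ) : ℝ) = ((N : ℝ) + 1) * (N.factorial : ℝ) := by
    rw [Nat.factorial_succ]; push_cast; ring
  have hfac2 : (((k + 1).factorial : ℕ) : ℝ) = ((k : ℝ) + 1) * (k.factorial : ℝ) := by
    rw [Nat.factorial_succ]; push_cast; ring
  have hfac3 : (((N - k).factorial : ℕ) : ℝ) = ((N : ℝ) - k) * ((N - k - 1).factorial : ℝ) := by
    rw [show N - k = (N - k - 1) + 1 by omega, Nat.factorial_succ]
    push_cast [hc]
    ring
  rw [hfac1, hfac2, hfac3]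
  have hfk : (k.factorial : ℝ) ≠ 0 := Nat.cast_ne_zero.mpr k.factorial_ne_zero
  have hfN : (N.factorial : ℝ) ≠ 0 := Nat.cast_ne_zero.mpr N.factorial_ne_zero
  have hfNk : ((N - k - 1).factorial : ℝ) ≠ 0 := Nat.cast_ne_zero.mpr (N - k - 1).factorial_ne_zero
  have hNk : ((N : ℝ) - k) ≠ 0 := by
    have : (k : ℝ) < N := by exact_mod_cast hk
    linarith
  have hka : (k : ℝ) + α + 1 ≠ 0 := (gamma_arg_pos α hα k).ne'
  have hk1 : ((k : ℝ) + 1) ≠ 0 := by positivity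
  have hN1 : ((N : ℝ) + 1) ≠ 0 := by positivity
  field_simp
  ring

lemma lagQ_hasDerivAt (α : ℝ) (hα : -1 < α) (N : ℕ) (x : ℝ) :
    HasDerivAt (lagQ α (N + 1)) (((N : ℝ) + 1) * lagMonic α N x) x := by
  have hfun : lagQ α (N + 1) = fun x =>
      (∑ k ∈ range (N + 2), lagC α (N + 1) k * x ^ k) +
      ((N : ℝ) + 1) * ∑ k ∈ range (N + 1), lagC α N k * x ^ k := by
    funext t
    unfold lagQ
    rw [lagMonic_eq_sum, lagMonic_eq_sum]
    norm_num
  rw [hfun]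
  have h1 : HasDerivAt (fun x : ℝ => ∑ k ∈ range (N + 2), lagC α (N + 1) k * x ^ k)
      (∑ k ∈ range (N + 2), lagC α (N + 1) k * (k * x ^ (k - 1))) x :=
    HasDerivAt.fun_sum fun k _ => (hasDerivAt_pow k x).const_mul _
  have h2 : HasDerivAt (fun x : ℝ => ∑ k ∈ range (N + 1), lagC α N k * x ^ k)
      (∑ k ∈ range (N + 1), lagC α N k * (k * x ^ (k - 1))) x :=
    HasDerivAt.fun_sum fun k _ => (hasDerivAt_pow k x).const_mul _
  have h := h1.add (h2.const_mul ((N : ℝ) + 1))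
  have heq : (∑ k ∈ range (N + 2), lagC α (N + 1) k * (k * x ^ (k - 1))) +
      ((N : ℝ) + 1) * (∑ k ∈ range (N + 1), lagC α N k * (k * x ^ (k - 1)))
      = ((N : ℝ) + 1) * lagMonic α N x := by
    rw [lagMonic_eq_sum]
    rw [Finset.sum_range_succ' (fun k => lagC α (N + 1) k * (k * x ^ (k - 1)))]
    rw [Finset.sum_range_succ' (fun k => lagC α N k * (k * x ^ (k - 1)))]
    simp only [Nat.cast_zero, zero_mul, mul_zero, add_zero, Nat.add_sub_cancel]
    rw [Finset.sum_range_succ (fun k => lagC α (N + 1) (k + 1) * (((k + 1 : ℕ) : ℝ) * x ^ k)) N]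
    rw [Finset.sum_range_succ (fun m => lagC α N m * x ^ m) N]
    rw [lagC_self α hα (N + 1), lagC_self α hα N]
    have hmain : ∀ k ∈ range N,
        lagC α (N+1) (k+1) * (((k+1:ℕ):ℝ) * x ^ k)
          + ((N:ℝ)+1) * (lagC α N (k+1) * (((k+1:ℕ):ℝ) * x ^ k))
        = ((N:ℝ)+1) * (lagC α N k * x ^ k) := by
      intro k hk
      have hrec := lagC_rec α hα N k (Finset.mem_range.mp hk)
      calc lagC α (N+1) (k+1) * (((k+1:ℕ):ℝ) * x ^ k)
            + ((N:ℝ)+1) * (lagC α N (k+1) * (((k+1:ℕ):ℝ) * x ^ k))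
          = (((k:ℝ) + 1) * (lagC α (N + 1) (k + 1) + ((N : ℝ) + 1) * lagC α N (k + 1))) * x ^ k := by
            push_cast; ring
        _ = (((N:ℝ)+1) * lagC α N k) * x ^ k := by rw [hrec]
        _ = ((N:ℝ)+1) * (lagC α N k * x ^ k) := by ring
    have hsum : ∑ k ∈ range N, lagC α (N+1) (k+1) * (((k+1:ℕ):ℝ) * x ^ k)
        + ((N:ℝ)+1) * ∑ k ∈ range N, lagC α N (k+1) * (((k+1:ℕ):ℝ) * x ^ k)
        = ((N:ℝ)+1) * ∑ k ∈ range N, lagC α N k * x ^ k := by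
      rw [Finset.mul_sum, Finset.mul_sum, ← Finset.sum_add_distrib]
      exact Finset.sum_congr rfl hmain
    push_cast at hsum ⊢
    linarith [hsum]
  rw [← heq]
  exact h

noncomputable def polyX (P : MvPolynomial (Fin 2) ℝ) (y : ℝ) : Polynomial ℝ :=
  ∑ d ∈ P.support, Polynomial.C (MvPolynomial.coeff d P * y ^ d 1) * Polynomial.X ^ d 0

noncomputable def polyY (P : MvPolynomial (Fin 2) ℝ) (x : ℝ) : Polynomial ℝ :=
  ∑ d ∈ P.support, Polynomial.C (MvPolynomial.coeff d P * x ^ d 0) * Polynomial.X ^ d 1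

lemma pev_eq (P : MvPolynomial (Fin 2) ℝ) (x y : ℝ) :
    pev P x y = ∑ d ∈ P.support, MvPolynomial.coeff d P * (x ^ d 0 * y ^ d 1) := by
  unfold pev
  rw [MvPolynomial.eval_eq']
  apply Finset.sum_congr rfl
  intro d _
  rw [Fin.prod_univ_two]
  simp

lemma polyX_eval (P : MvPolynomial (Fin 2) ℝ) (y x : ℝ) :
    (polyX P y).eval x = pev P x y := by
  rw [pev_eq]
  unfold polyX
  rw [Polynomial.eval_finset_sum]
  apply Finset.sum_congr rfl
  intro d _
  simp
  ring

lemma polyY_eval (P : MvPolynomial (Fin 2) ℝ) (x y : ℝ) :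
    (polyY P x).eval y = pev P x y := by
  rw [pev_eq]
  unfold polyY
  rw [Polynomial.eval_finset_sum]
  apply Finset.sum_congr rfl
  intro d _
  simp
  ring

lemma coord_le_totalDegree (P : MvPolynomial (Fin 2) ℝ) (d : Fin 2 →₀ ℕ)
    (hd : d ∈ P.support) (i : Fin 2) : d i ≤ P.totalDegree := by
  refine le_trans ?_ (MvPolynomial.le_totalDegree hd)
  rw [Finsupp.sum_fintype _ _ (fun _ => rfl), Fin.sum_univ_two]
  fin_cases i <;> simp

lemma polyX_natDegree (P : MvPolynomial (Fin 2) ℝ) (y : ℝ) :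
    (polyX P y).natDegree ≤ P.totalDegree := by
  apply Polynomial.natDegree_sum_le_of_forall_le
  intro d hd
  refine le_trans (Polynomial.natDegree_C_mul_le _ _) ?_
  refine le_trans (Polynomial.natDegree_X_pow_le _) ?_
  exact coord_le_totalDegree P d hd 0

lemma polyY_natDegree (P : MvPolynomial (Fin 2) ℝ) (x : ℝ) :
    (polyY P x).natDegree ≤ P.totalDegree := by
  apply Polynomial.natDegree_sum_le_of_forall_le
  intro d hd
  refine le_trans (Polynomial.natDegree_C_mul_le _ _) ?_
  refine le_trans (Polynomial.natDegree_X_pow_le _) ?_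
  exact coord_le_totalDegree P d hd 1

lemma polyX_hasDerivAt (P : MvPolynomial (Fin 2) ℝ) (y x : ℝ) :
    HasDerivAt (fun t => pev P t y) ((Polynomial.derivative (polyX P y)).eval x) x := by
  have : (fun t => pev P t y) = fun t => (polyX P y).eval t := by
    funext t; rw [polyX_eval]
  rw [this]
  exact (polyX P y).hasDerivAt x

lemma polyY_hasDerivAt (P : MvPolynomial (Fin 2) ℝ) (x y : ℝ) :
    HasDerivAt (fun t => pev P x t) ((Polynomial.derivative (polyY P x)).eval y) y := by
  have : (fun t => pev P x t) = fun t => (polyY P x).eval t := by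
    funext t; rw [polyY_eval]
  rw [this]
  exact (polyY P x).hasDerivAt y

lemma deriv_degree_lt (q : Polynomial ℝ) (n : ℕ) (hq : q.natDegree ≤ n) :
    (Polynomial.derivative q).degree < (n : WithBot ℕ) := by
  by_cases h : q = 0
  · simp only [h, map_zero, Polynomial.degree_zero]
    exact WithBot.bot_lt_coe n
  · calc (Polynomial.derivative q).degree < q.degree := Polynomial.degree_derivative_lt h
      _ ≤ (q.natDegree : WithBot ℕ) := Polynomial.degree_le_natDegree
      _ ≤ (n : WithBot ℕ) := by exact_mod_cast Nat.cast_le.mpr hq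

end Aux

/-- In the product Laguerre setting, `Q_0^n(x,y) = q_n(w_α;x)` and `Q_n^n(x,y) = q_n(w_β;y)`
are themselves (monic, up to an additive constant) `∇`-orthogonal polynomials of degree `n`:
they are orthogonal to all bivariate polynomials of total degree `≤ n-1`. -/
theorem lagQ_extreme_orthogonal (α β : ℝ) (hα : -1 < α) (hβ : -1 < β) (n : ℕ) (hn : 1 ≤ n)
    (P : MvPolynomial (Fin 2) ℝ) (hP : P.totalDegree < n) :
    lagGrad α β (fun x _ => lagQ α n x) (pev P) = 0 ∧
    lagGrad α β (fun _ y => lagQ β n y) (pev P) = 0 := by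
  obtain ⟨N, rfl⟩ : ∃ N, n = N + 1 := ⟨n - 1, by omega⟩
  have hdegX : ∀ y : ℝ, (Polynomial.derivative (polyX P y)).degree < ((N : ℕ) : WithBot ℕ) := by
    intro y
    exact deriv_degree_lt _ _ (le_trans (polyX_natDegree P y) (by omega))
  have hdegY : ∀ x : ℝ, (Polynomial.derivative (polyY P x)).degree < ((N : ℕ) : WithBot ℕ) := by
    intro x
    exact deriv_degree_lt _ _ (le_trans (polyY_natDegree P x) (by omega))
  constructor
  · -- first component
    unfold lagGrad
    have hfun : (fun p : ℝ × ℝ =>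
        (deriv (fun t => (fun x _ => lagQ α (N + 1) x) t p.2) p.1 * deriv (fun t => pev P t p.2) p.1 +
          deriv (fun t => (fun x _ => lagQ α (N + 1) x) p.1 t) p.2 * deriv (fun t => pev P p.1 t) p.2) *
          (Real.rpow p.1 α * Real.exp (-p.1) * (Real.rpow p.2 β * Real.exp (-p.2))))
        = fun p : ℝ × ℝ =>
          ((((N : ℝ) + 1) * lagMonic α N p.1) * ((Polynomial.derivative (polyX P p.2)).eval p.1)) *
            (Real.rpow p.1 α * Real.exp (-p.1) * (Real.rpow p.2 β * Real.exp (-p.2))) := by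
      funext p
      have hd1 : deriv (fun t => lagQ α (N + 1) t) p.1 = ((N : ℝ) + 1) * lagMonic α N p.1 :=
        (lagQ_hasDerivAt α hα N p.1).deriv
      have hd2 : deriv (fun t => pev P t p.2) p.1 = (Polynomial.derivative (polyX P p.2)).eval p.1 :=
        (polyX_hasDerivAt P p.2 p.1).deriv
      have hd3 : deriv (fun _ : ℝ => lagQ α (N + 1) p.1) p.2 = 0 := deriv_const _ _
      simp only [hd1, hd2, hd3, zero_mul, add_zero]
    rw [hfun]
    have hinner : ∀ y : ℝ, (∫ x in Set.Ioi (0:ℝ),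
        ((((N : ℝ) + 1) * lagMonic α N x) * ((Polynomial.derivative (polyX P y)).eval x)) *
          (Real.rpow x α * Real.exp (-x) * (Real.rpow y β * Real.exp (-y)))) = 0 := by
      intro y
      have hre : (fun x => ((((N : ℝ) + 1) * lagMonic α N x) * ((Polynomial.derivative (polyX P y)).eval x)) *
            (Real.rpow x α * Real.exp (-x) * (Real.rpow y β * Real.exp (-y))))
          = fun x => (((N : ℝ) + 1) * (Real.rpow y β * Real.exp (-y))) *
            (lagMonic α N x * ((Polynomial.derivative (polyX P y)).eval x *
              (Real.rpow x α * Real.exp (-x)))) := by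
        funext x; ring
      rw [hre, MeasureTheory.integral_const_mul, poly_ortho α hα N _ (hdegX y), mul_zero]
    rw [Measure.volume_eq_prod, ← Measure.prod_restrict]
    by_cases hInt : Integrable (fun p : ℝ × ℝ =>
        ((((N : ℝ) + 1) * lagMonic α N p.1) * ((Polynomial.derivative (polyX P p.2)).eval p.1)) *
          (Real.rpow p.1 α * Real.exp (-p.1) * (Real.rpow p.2 β * Real.exp (-p.2))))
        ((volume.restrict (Set.Ioi (0:ℝ))).prod (volume.restrict (Set.Ioi (0:ℝ))))
    · rw [MeasureTheory.integral_prod_symm _ hInt]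
      have hz : (fun y : ℝ => ∫ x, ((((N : ℝ) + 1) * lagMonic α N x) *
            ((Polynomial.derivative (polyX P y)).eval x)) *
            (Real.rpow x α * Real.exp (-x) * (Real.rpow y β * Real.exp (-y)))
              ∂(volume.restrict (Set.Ioi (0:ℝ)))) = fun _ => (0:ℝ) :=
        funext fun y => hinner y
      rw [hz]
      simp
    · rw [MeasureTheory.integral_undef hInt, mul_zero]
  · -- second component
    unfold lagGrad
    have hfun : (fun p : ℝ × ℝ =>
        (deriv (fun t => (fun _ y => lagQ β (N + 1) y) t p.2) p.1 * deriv (fun t => pev P t p.2) p.1 +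
          deriv (fun t => (fun _ y => lagQ β (N + 1) y) p.1 t) p.2 * deriv (fun t => pev P p.1 t) p.2) *
          (Real.rpow p.1 α * Real.exp (-p.1) * (Real.rpow p.2 β * Real.exp (-p.2))))
        = fun p : ℝ × ℝ =>
          ((((N : ℝ) + 1) * lagMonic β N p.2) * ((Polynomial.derivative (polyY P p.1)).eval p.2)) *
            (Real.rpow p.1 α * Real.exp (-p.1) * (Real.rpow p.2 β * Real.exp (-p.2))) := by
      funext p
      have hd1 : deriv (fun t => lagQ β (N + 1) t) p.2 = ((N : ℝ) + 1) * lagMonic β N p.2 :=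
        (lagQ_hasDerivAt β hβ N p.2).deriv
      have hd2 : deriv (fun t => pev P p.1 t) p.2 = (Polynomial.derivative (polyY P p.1)).eval p.2 :=
        (polyY_hasDerivAt P p.1 p.2).deriv
      have hd3 : deriv (fun _ : ℝ => lagQ β (N + 1) p.2) p.1 = 0 := deriv_const _ _
      simp only [hd1, hd2, hd3, zero_mul, zero_add]
    rw [hfun]
    have hinner : ∀ x : ℝ, (∫ y in Set.Ioi (0:ℝ),
        ((((N : ℝ) + 1) * lagMonic β N y) * ((Polynomial.derivative (polyY P x)).eval y)) *
          (Real.rpow x α * Real.exp (-x) * (Real.rpow y β * Real.exp (-y)))) = 0 := by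
      intro x
      have hre : (fun y => ((((N : ℝ) + 1) * lagMonic β N y) * ((Polynomial.derivative (polyY P x)).eval y)) *
            (Real.rpow x α * Real.exp (-x) * (Real.rpow y β * Real.exp (-y))))
          = fun y => (((N : ℝ) + 1) * (Real.rpow x α * Real.exp (-x))) *
            (lagMonic β N y * ((Polynomial.derivative (polyY P x)).eval y *
              (Real.rpow y β * Real.exp (-y)))) := by
        funext y; ring
      rw [hre, MeasureTheory.integral_const_mul, poly_ortho β hβ N _ (hdegY x), mul_zero]
    rw [Measure.volume_eq_prod, ← Measure.prod_restrict]
    by_cases hInt : Integrable (fun p : ℝ × ℝ =>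
        ((((N : ℝ) + 1) * lagMonic β N p.2) * ((Polynomial.derivative (polyY P p.1)).eval p.2)) *
          (Real.rpow p.1 α * Real.exp (-p.1) * (Real.rpow p.2 β * Real.exp (-p.2))))
        ((volume.restrict (Set.Ioi (0:ℝ))).prod (volume.restrict (Set.Ioi (0:ℝ))))
    · rw [MeasureTheory.integral_prod _ hInt]
      have hz : (fun x : ℝ => ∫ y, ((((N : ℝ) + 1) * lagMonic β N y) *
            ((Polynomial.derivative (polyY P x)).eval y)) *
            (Real.rpow x α * Real.exp (-x) * (Real.rpow y β * Real.exp (-y)))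
              ∂(volume.restrict (Set.Ioi (0:ℝ)))) = fun _ => (0:ℝ) :=
        funext fun x => hinner x
      rw [hz]
      simp
    · rw [MeasureTheory.integral_undef hInt, mul_zero]
end
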